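/- The budget allocation objective f(S) = ∑_{b∈B} (1 - ∏_{a∈Γ(b)} p(a)^{|S ∩ E_a|}) is a monotone submodular function on 2^E. -/

import Mathlib

open Finset

theorem budget_allocation_monotone_submodular
    {A B : Type*} [Fintype A] [DecidableEq A] [Fintype B]
    (Γ : B → Finset A) (p : A → ℝ) (hp : ∀ a, p a ∈ Set.Icc (0:ℝ) 1)
    (c : A → ℕ)
    (Egnd : Finset (A × ℕ))
    (hE : Egnd = Finset.univ.biUnion (fun a => {a} ×ˢ Finset.Icc 1 (c a)))
    (f : Finset (A × ℕ) → ℝ)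
    (hf : ∀ S : Finset (A × ℕ), f S = ∑ b : B,
      (1 - ∏ a ∈ Γ b, p a ^ (S ∩ ({a} ×ˢ Finset.Icc 1 (c a))).card)) :
    (∀ S T : Finset (A × ℕ), S ⊆ T → T ⊆ Egnd → f S ≤ f T) ∧
    (∀ S T : Finset (A × ℕ), S ⊆ Egnd → T ⊆ Egnd →
      f S + f T ≥ f (S ∩ T) + f (S ∪ T)) := by
  set n : A → Finset (A × ℕ) → ℕ :=
    fun a S => (S ∩ ({a} ×ˢ Finset.Icc 1 (c a))).card with hn
  set P : B → Finset (A × ℕ) → ℝ := fun b S => ∏ a ∈ Γ b, p a ^ n a S with hP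
  have hPnonneg : ∀ b S, 0 ≤ P b S := by
    intro b S
    exact Finset.prod_nonneg fun a _ => pow_nonneg (hp a).1 _
  have hPmono : ∀ b S T, S ⊆ T → P b T ≤ P b S := by
    intro b S T hST
    apply Finset.prod_le_prod
    · intro a _; exact pow_nonneg (hp a).1 _
    · intro a _
      exact pow_le_pow_of_le_one (hp a).1 (hp a).2
        (Finset.card_le_card (Finset.inter_subset_inter hST (Finset.Subset.refl _)))
  have hnadd : ∀ a S T, n a (S ∩ T) + n a (S ∪ T) = n a S + n a T := by
    intro a S T
    simp only [hn]
    rw [Finset.inter_inter_distrib_right, Finset.union_inter_distrib_right,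
      Finset.card_inter_add_card_union]
  have hPmul : ∀ b S T, P b (S ∩ T) * P b (S ∪ T) = P b S * P b T := by
    intro b S T
    simp only [hP, ← Finset.prod_mul_distrib, ← pow_add]
    refine Finset.prod_congr rfl fun a _ => ?_
    rw [hnadd a S T]
  have key : ∀ b S T, P b S + P b T ≤ P b (S ∩ T) + P b (S ∪ T) := by
    intro b S T
    have h1 := hPmono b (S ∩ T) S (Finset.inter_subset_left)
    have h2 := hPmono b (S ∩ T) T (Finset.inter_subset_right)
    have h3 := hPmul b S T
    have h4 := hPnonneg b (S ∪ T)
    have h5 := hPnonneg b S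
    have h6 := hPnonneg b T
    nlinarith [mul_nonneg h5 h6, sq_nonneg (P b S - P b T)]
  constructor
  · intro S T hST _
    rw [hf, hf]
    apply Finset.sum_le_sum
    intro b _
    have := hPmono b S T hST
    simp only [hP] at this
    linarith
  · intro S T _ _
    rw [hf, hf, hf, hf]
    rw [← Finset.sum_add_distrib, ← Finset.sum_add_distrib]
    apply Finset.sum_le_sum
    intro b _
    have := key b S T
    simp only [hP] at this
    linarith
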